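/- With H^{(r+λ)}(y; Φ(r)) = e^{Φ(r)y} for y ≤ 0 and the formula of the previous integral for y ≥ 0, for every z ∈ ℝ the improper integral ∫_{-∞}^{z} H^{(r+λ)}(y; Φ(r)) dy converges and equals (1/Φ(r)) ( Z^{(r+λ)}(z; Φ(r)) - λ (Φ(r+λ)/(Φ(r+λ) - Φ(r))) 𝑊̄^{(r+λ)}(z) ), where for z ≤ 0 the conventions Z^{(r+λ)}(z; Φ(r)) = e^{Φ(r)z} and 𝑊̄^{(r+λ)}(z) = 0 apply. -/

import Mathlib

open MeasureTheory

/-- The function H^{(r+λ)}(·;Φ(r)), with the conventions W = 0 and the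
integral ∫₀^{y∨0} on the negative half-line. -/
noncomputable def Hfun (W : ℝ → ℝ) (lam pr prl y : ℝ) : ℝ :=
  Real.exp (pr * y) * (1 + lam * ∫ u in (0 : ℝ)..(max y 0), Real.exp (-(pr * u)) * W u)
    - (lam / (prl - pr)) * W y

lemma intervalIntegral_exp_mul (c a b : ℝ) (hc : c ≠ 0) :
    ∫ x in a..b, Real.exp (c * x) = (Real.exp (c * b) - Real.exp (c * a)) / c := by
  rw [intervalIntegral.integral_comp_mul_left (fun x => Real.exp x) hc, integral_exp,
    smul_eq_mul]
  ring

lemma integrableOn_exp_mul_Iic' {c : ℝ} (hc : 0 < c) (z : ℝ) :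
    IntegrableOn (fun y => Real.exp (c * y)) (Set.Iic z) := by
  refine integrableOn_Iic_of_intervalIntegral_norm_bounded
    (l := Filter.atBot) (a := fun x : ℝ => x) (Real.exp (c * z) / c) z
    (fun i => ((Real.continuous_exp.comp (continuous_const.mul continuous_id)).integrableOn_Ioc))
    Filter.tendsto_id ?_
  filter_upwards with i
  have : ∀ x, ‖Real.exp (c * x)‖ = Real.exp (c * x) := fun x =>
    Real.norm_of_nonneg (Real.exp_pos _).le
  simp_rw [this]
  rw [intervalIntegral_exp_mul c i z hc.ne']
  have h1 : 0 ≤ Real.exp (c * i) := (Real.exp_pos _).le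
  gcongr
  linarith

lemma integral_exp_mul_Iic' {c : ℝ} (hc : 0 < c) (z : ℝ) :
    ∫ y in Set.Iic z, Real.exp (c * y) = Real.exp (c * z) / c := by
  have hderiv : ∀ x ∈ Set.Iio z,
      HasDerivAt (fun x => Real.exp (c * x) / c) (Real.exp (c * x)) x := by
    intro x _
    have h := (((hasDerivAt_id x).const_mul c).exp).div_const c
    simp only [id_eq, mul_one] at h
    rwa [mul_div_cancel_right₀ _ hc.ne'] at h
  have hcont : ContinuousWithinAt (fun x => Real.exp (c * x) / c) (Set.Iic z) z :=
    ((Real.continuous_exp.comp (continuous_const.mul continuous_id)).div_const c).continuousWithinAt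
  have htend : Filter.Tendsto (fun x => Real.exp (c * x) / c) Filter.atBot (nhds 0) := by
    have h1 : Filter.Tendsto (fun x : ℝ => c * x) Filter.atBot Filter.atBot :=
      Filter.tendsto_id.const_mul_atBot hc
    have := (Real.tendsto_exp_atBot.comp h1).div_const c
    simpa using this
  have := integral_Iic_of_hasDerivAt_of_tendsto hcont hderiv
    (integrableOn_exp_mul_Iic' hc z) htend
  simpa using this

/-- For every z ∈ ℝ, the improper integral ∫_{-∞}^z H^{(r+λ)}(y;Φ(r)) dy converges
and equals (1/Φ(r))( Z^{(r+λ)}(z;Φ(r)) - λ (Φ(r+λ)/(Φ(r+λ)-Φ(r))) 𝑊̄^{(r+λ)}(z) ),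
with the conventions Z^{(r+λ)}(z;Φ(r)) = e^{Φ(r)z} and 𝑊̄^{(r+λ)}(z) = 0 for z ≤ 0. -/
theorem stmt6 (W : ℝ → ℝ) (r lam pr prl : ℝ)
    (hr : 0 < r) (hlam : 0 < lam) (hpr : 0 < pr) (hlt : pr < prl)
    (hWcont : ContinuousOn W (Set.Ici (0 : ℝ)))
    (hWneg : ∀ y < (0 : ℝ), W y = 0)
    (hWmono : MonotoneOn W (Set.Ici (0 : ℝ)))
    (z : ℝ) :
    IntegrableOn (Hfun W lam pr prl) (Set.Iic z) volume ∧
      (∫ y in Set.Iic z, Hfun W lam pr prl y)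
        = (1 / pr) *
            (Real.exp (pr * z)
                * (1 + lam * ∫ u in (0 : ℝ)..(max z 0), Real.exp (-(pr * u)) * W u)
              - lam * (prl / (prl - pr))
                * ∫ u in (0 : ℝ)..(max z 0), W u) := by
  have hsub : prl - pr ≠ 0 := sub_ne_zero.2 hlt.ne'
  have hprne : pr ≠ 0 := hpr.ne'
  -- the continuous modification of W
  set Wt : ℝ → ℝ := fun y => W (max y 0) with hWtdef
  have hWt : Continuous Wt :=
    hWcont.comp_continuous (continuous_id.max continuous_const) fun x => Set.mem_Ici.2 (le_max_right _ _)
  have hcont' : Continuous fun u => Real.exp (-(pr * u)) * Wt u :=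
    (Real.continuous_exp.comp (continuous_const.mul continuous_id).neg).mul hWt
  -- FTC derivatives of the primitives
  have hA : ∀ y : ℝ, HasDerivAt (fun t => ∫ u in (0 : ℝ)..t, Real.exp (-(pr * u)) * Wt u)
      (Real.exp (-(pr * y)) * Wt y) y := fun y =>
    intervalIntegral.integral_hasDerivAt_right (hcont'.intervalIntegrable _ _)
      hcont'.aestronglyMeasurable.stronglyMeasurableAtFilter hcont'.continuousAt
  have hB : ∀ y : ℝ, HasDerivAt (fun t => ∫ u in (0 : ℝ)..t, Wt u) (Wt y) y := fun y =>
    intervalIntegral.integral_hasDerivAt_right (hWt.intervalIntegrable _ _)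
      hWt.aestronglyMeasurable.stronglyMeasurableAtFilter hWt.continuousAt
  set G : ℝ → ℝ := fun y =>
    Real.exp (pr * y) * (1 + lam * ∫ u in (0 : ℝ)..y, Real.exp (-(pr * u)) * Wt u)
      - lam / (prl - pr) * Wt y with hGdef
  have hGcont : Continuous G := by
    refine ((Real.continuous_exp.comp (continuous_const.mul continuous_id)).mul
      (continuous_const.add (continuous_const.mul ?_))).sub (continuous_const.mul hWt)
    exact continuous_iff_continuousAt.2 fun y => (hA y).continuousAt
  set F : ℝ → ℝ := fun y =>
    1 / pr * (Real.exp (pr * y) * (1 + lam * ∫ u in (0 : ℝ)..y, Real.exp (-(pr * u)) * Wt u))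
      - lam * prl / (pr * (prl - pr)) * ∫ u in (0 : ℝ)..y, Wt u with hFdef
  have hF : ∀ y : ℝ, HasDerivAt F (G y) y := by
    intro y
    have hexp : HasDerivAt (fun t => Real.exp (pr * t)) (Real.exp (pr * y) * (pr * 1)) y :=
      ((hasDerivAt_id y).const_mul pr).exp
    have hinner : HasDerivAt
        (fun t => 1 + lam * ∫ u in (0 : ℝ)..t, Real.exp (-(pr * u)) * Wt u)
        (lam * (Real.exp (-(pr * y)) * Wt y)) y := ((hA y).const_mul lam).const_add 1
    have h := ((hexp.mul hinner).const_mul (1 / pr)).sub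
      ((hB y).const_mul (lam * prl / (pr * (prl - pr))))
    refine h.congr_deriv ?_
    have hx : Real.exp (-(pr * y)) = (Real.exp (pr * y))⁻¹ := Real.exp_neg _
    have hxne : Real.exp (pr * y) ≠ 0 := (Real.exp_pos _).ne'
    simp only [hGdef, hx]
    field_simp
    ring
  have hFTC : ∀ a b : ℝ, ∫ y in a..b, G y = F b - F a := fun a b =>
    intervalIntegral.integral_eq_sub_of_hasDerivAt (fun y _ => hF y)
      (hGcont.intervalIntegrable _ _)
  have hF0 : F 0 = 1 / pr := by simp [hFdef]
  -- a.e. equality with the exponential on Iic z' for z' ≤ 0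
  have hHexp : ∀ y < (0 : ℝ), Hfun W lam pr prl y = Real.exp (pr * y) := by
    intro y hy
    simp [Hfun, max_eq_right hy.le, hWneg y hy]
  have haeeq : ∀ z' ≤ (0 : ℝ), Hfun W lam pr prl
      =ᵐ[volume.restrict (Set.Iic z')] fun y => Real.exp (pr * y) := by
    intro z' hz'
    have h0 : ∀ᵐ y : ℝ ∂volume.restrict (Set.Iic z'), y ≠ 0 := by
      rw [ae_iff]
      have hsub2 : {y : ℝ | ¬ y ≠ 0} ⊆ {0} := fun y hy => by simpa using not_not.1 hy
      refine measure_mono_null hsub2 ?_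
      rw [Measure.restrict_apply' measurableSet_Iic]
      exact measure_mono_null Set.inter_subset_left Real.volume_singleton
    filter_upwards [ae_restrict_mem measurableSet_Iic, h0] with y hy hy0
    exact hHexp y (lt_of_le_of_ne (hy.trans hz') hy0)
  have hIntNeg : ∀ z' ≤ (0 : ℝ), IntegrableOn (Hfun W lam pr prl) (Set.Iic z') := fun z' hz' =>
    (integrableOn_exp_mul_Iic' hpr z').congr_fun_ae (haeeq z' hz').symm
  have hValNeg : ∀ z' ≤ (0 : ℝ),
      (∫ y in Set.Iic z', Hfun W lam pr prl y) = Real.exp (pr * z') / pr := fun z' hz' => by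
    rw [integral_congr_ae (haeeq z' hz'), integral_exp_mul_Iic' hpr z']
  rcases le_or_gt z 0 with hz | hz
  · refine ⟨hIntNeg z hz, ?_⟩
    rw [hValNeg z hz, max_eq_right hz]
    simp
    ring
  · -- z > 0
    have hHG : ∀ y ∈ Set.Icc (0 : ℝ) z, Hfun W lam pr prl y = G y := by
      intro y hy
      have hmax : max y 0 = y := max_eq_left hy.1
      have hWy : Wt y = W y := by simp [hWtdef, hmax]
      have hint : (∫ u in (0 : ℝ)..(max y 0), Real.exp (-(pr * u)) * W u)
          = ∫ u in (0 : ℝ)..y, Real.exp (-(pr * u)) * Wt u := by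
        rw [hmax]
        refine intervalIntegral.integral_congr fun u hu => ?_
        rw [Set.uIcc_of_le hy.1] at hu
        simp [hWtdef, max_eq_left hu.1]
      simp only [Hfun, hGdef, hint, hWy]
    have hsplit : Set.Iic (0 : ℝ) ∪ Set.Ioc 0 z = Set.Iic z := Set.Iic_union_Ioc_eq_Iic hz.le
    have int1 : IntegrableOn (Hfun W lam pr prl) (Set.Iic (0 : ℝ)) := hIntNeg 0 le_rfl
    have int2 : IntegrableOn (Hfun W lam pr prl) (Set.Ioc (0 : ℝ) z) := by
      refine (hGcont.integrableOn_Ioc).congr_fun (fun y hy => ?_) measurableSet_Ioc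
      exact (hHG y ⟨hy.1.le, hy.2⟩).symm
    have hint : IntegrableOn (Hfun W lam pr prl) (Set.Iic z) := by
      rw [← hsplit]; exact int1.union int2
    refine ⟨hint, ?_⟩
    have hIoc : (∫ y in Set.Ioc (0 : ℝ) z, Hfun W lam pr prl y) = F z - F 0 := by
      rw [← intervalIntegral.integral_of_le hz.le, ← hFTC 0 z]
      refine intervalIntegral.integral_congr fun y hy => ?_
      rw [Set.uIcc_of_le hz.le] at hy
      exact hHG y hy
    have hLHS : (∫ y in Set.Iic z, Hfun W lam pr prl y) = F z := by
      rw [← hsplit, setIntegral_union (Set.Iic_disjoint_Ioc le_rfl) measurableSet_Ioc int1 int2,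
        hValNeg 0 le_rfl, hIoc, hF0]
      simp only [mul_zero, Real.exp_zero]
      ring
    rw [hLHS]
    have hmax : max z 0 = z := max_eq_left hz.le
    have hint1 : (∫ u in (0 : ℝ)..(max z 0), Real.exp (-(pr * u)) * W u)
        = ∫ u in (0 : ℝ)..z, Real.exp (-(pr * u)) * Wt u := by
      rw [hmax]
      refine intervalIntegral.integral_congr fun u hu => ?_
      rw [Set.uIcc_of_le hz.le] at hu
      simp [hWtdef, max_eq_left hu.1]
    have hint2 : (∫ u in (0 : ℝ)..(max z 0), W u) = ∫ u in (0 : ℝ)..z, Wt u := by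
      rw [hmax]
      refine intervalIntegral.integral_congr fun u hu => ?_
      rw [Set.uIcc_of_le hz.le] at hu
      simp [hWtdef, max_eq_left hu.1]
    rw [hint1, hint2]
    simp only [hFdef]
    field_simp
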